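/- arXiv:2409.11139 — 2 statements merged into one kernel-verified Lean document; each statement's English description precedes it below -/
import Mathlib

section
/- Sufficient decrease of the proximal linearization step: let Γ ⊆ {1,…,N}, let ρ > 0, and let u ∈ ℝ^N satisfy u_j = f_j for all j ∉ Γ and u_j ≠ f_j for all j ∈ Γ. Set w_j = p·|u_j − f_j|^{p−1} for j ∈ Γ. If v ∈ ℝ^N satisfies v_j = f_j for all j ∉ Γ and v minimizes the function H(x) = λ Σ_{j∈Γ} w_j·|x_j − f_j| + Σ_{i=1}^{M} a_i ‖D_i x‖ + (ρ/2)‖x − u‖² over the affine set {x ∈ ℝ^N : x_j = f_j ∀ j ∉ Γ}, then (ρ/2)‖v − u‖² ≤ F(u) − F(v). -/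
/-- Tangent-line (concavity) inequality for `t ↦ t ^ p`, `0 < p < 1`. -/
lemma rpow_tangent {p : ℝ} (hp0 : 0 < p) (hp1 : p < 1) {s t : ℝ}
    (hs : 0 < s) (ht : 0 ≤ t) :
    t ^ p ≤ s ^ p + p * s ^ (p - 1) * (t - s) := by
  have hb : (-1 : ℝ) ≤ t / s - 1 := by
    have : 0 ≤ t / s := div_nonneg ht hs.le
    linarith
  have h := rpow_one_add_le_one_add_mul_self hb hp0.le hp1.le
  have h1 : (t / s) ^ p ≤ 1 + p * (t / s - 1) := by
    have : (1 : ℝ) + (t / s - 1) = t / s := by ring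
    rwa [this] at h
  have hdiv : (t / s) ^ p = t ^ p / s ^ p := Real.div_rpow ht hs.le p
  have hsp : 0 < s ^ p := Real.rpow_pos_of_pos hs p
  have hsub : s ^ (p - 1) = s ^ p / s := by
    rw [Real.rpow_sub hs, Real.rpow_one]
  have h2 : t ^ p / s ^ p ≤ 1 + p * (t / s - 1) := by rwa [hdiv] at h1
  have h3 := mul_le_mul_of_nonneg_left h2 hsp.le
  have hx : s ^ p * (t ^ p / s ^ p) = t ^ p := by field_simp
  rw [hx] at h3
  rw [hsub]
  have : s ^ p * (1 + p * (t / s - 1)) = s ^ p + p * (s ^ p / s) * (t - s) := by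
    field_simp
  linarith [this ▸ h3]

/-- Sufficient decrease of the proximal linearization step:
if `u` agrees with `f` off `Γ` and differs from `f` on `Γ`, weights
`w_j = p|u_j - f_j|^(p-1)`, and `v` minimizes the proximally linearized
objective `H` over the affine set `{x : x_j = f_j ∀ j ∉ Γ}`, then
`(ρ/2)‖v - u‖² ≤ F(u) - F(v)`. -/
theorem sufficient_decrease (N M : ℕ) (f : Fin N → ℝ) (lam p : ℝ)
    (hlam : 0 < lam) (hp0 : 0 < p) (hp1 : p < 1)
    (D : Fin M → Matrix (Fin 3) (Fin N) ℝ)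
    (a : Fin M → ℝ) (ha : ∀ i, 0 < a i)
    (F : (Fin N → ℝ) → ℝ)
    (hF : ∀ u, F u =
      lam * ∑ j, |u j - f j| ^ p +
      ∑ i, a i * Real.sqrt (∑ k, ((D i).mulVec u) k ^ 2))
    (Γ : Finset (Fin N)) (ρ : ℝ) (hρ : 0 < ρ)
    (u : Fin N → ℝ) (hu1 : ∀ j ∉ Γ, u j = f j) (hu2 : ∀ j ∈ Γ, u j ≠ f j)
    (w : Fin N → ℝ) (hw : ∀ j ∈ Γ, w j = p * |u j - f j| ^ (p - 1))
    (H : (Fin N → ℝ) → ℝ)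
    (hH : ∀ x, H x =
      lam * ∑ j ∈ Γ, w j * |x j - f j| +
      ∑ i, a i * Real.sqrt (∑ k, ((D i).mulVec x) k ^ 2) +
      ρ / 2 * ∑ j, (x j - u j) ^ 2)
    (v : Fin N → ℝ) (hv1 : ∀ j ∉ Γ, v j = f j)
    (hv2 : ∀ x : Fin N → ℝ, (∀ j ∉ Γ, x j = f j) → H v ≤ H x) :
    ρ / 2 * ∑ j, (v j - u j) ^ 2 ≤ F u - F v := by
  set Tu := ∑ i, a i * Real.sqrt (∑ k, ((D i).mulVec u) k ^ 2) with hTu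
  set Tv := ∑ i, a i * Real.sqrt (∑ k, ((D i).mulVec v) k ^ 2) with hTv
  set Q := ∑ j, (v j - u j) ^ 2 with hQ
  -- reduce the full sums in F to sums over Γ
  have hsumu : ∑ j, |u j - f j| ^ p = ∑ j ∈ Γ, |u j - f j| ^ p := by
    rw [eq_comm]
    apply Finset.sum_subset (Finset.subset_univ Γ)
    intro j _ hj
    rw [hu1 j hj, sub_self, abs_zero, Real.zero_rpow hp0.ne']
  have hsumv : ∑ j, |v j - f j| ^ p = ∑ j ∈ Γ, |v j - f j| ^ p := by
    rw [eq_comm]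
    apply Finset.sum_subset (Finset.subset_univ Γ)
    intro j _ hj
    rw [hv1 j hj, sub_self, abs_zero, Real.zero_rpow hp0.ne']
  -- H v ≤ H u
  have hHvu : H v ≤ H u := hv2 u hu1
  have hQu : ∑ j, (u j - u j) ^ 2 = 0 := by simp
  rw [hH v, hH u, hQu] at hHvu
  -- concavity: pointwise bound on Γ
  have hkey : ∀ j ∈ Γ, |v j - f j| ^ p ≤ |u j - f j| ^ p +
      w j * |v j - f j| - w j * |u j - f j| := by
    intro j hj
    have hs : 0 < |u j - f j| := abs_pos.mpr (sub_ne_zero.mpr (hu2 j hj))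
    have := rpow_tangent hp0 hp1 hs (abs_nonneg (v j - f j))
    rw [hw j hj]
    linarith [this]
  have hsum : ∑ j ∈ Γ, |v j - f j| ^ p ≤
      ∑ j ∈ Γ, (|u j - f j| ^ p + w j * |v j - f j| - w j * |u j - f j|) :=
    Finset.sum_le_sum hkey
  rw [Finset.sum_sub_distrib, Finset.sum_add_distrib] at hsum
  rw [hF u, hF v, ← hTu, ← hTv, hsumu, hsumv]
  have := mul_le_mul_of_nonneg_left hsum hlam.le
  nlinarith [hHvu, this]
end

section
/- Quantitative bound on the relative-error vector (content of Lemma 4.2): let Γ ⊆ {1,…,N}, ε > 0, ρ > 0, and let u, v ∈ ℝ^N satisfy |u_j − f_j| ≥ ε and |v_j − f_j| ≥ ε for all j ∈ Γ. Define w_j(x) = p·|x_j − f_j|^{p−1} for j ∈ Γ, and define the vector α = λ Σ_{j∈Γ} (w_j(v) − w_j(u))·sgn(v_j − f_j)·e_j − ρ·(v − u) ∈ ℝ^N, where e_j is the j-th standard basis vector. Then ‖α‖ ≤ (λ·p·(1−p)·ε^{p−2}·N + ρ)·‖v − u‖. -/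
lemma rpow_lip (p ε : ℝ) (hp0 : 0 < p) (hp1 : p < 1) (hε : 0 < ε)
    (a b : ℝ) (ha : ε ≤ a) (hb : ε ≤ b) :
    |a ^ (p - 1) - b ^ (p - 1)| ≤ (1 - p) * ε ^ (p - 2) * |a - b| := by
  have key : ∀ x ∈ Set.Ici ε, HasDerivWithinAt (fun t : ℝ => t ^ (p - 1))
      ((p - 1) * x ^ (p - 1 - 1)) (Set.Ici ε) x := by
    intro x hx
    exact (Real.hasDerivAt_rpow_const (Or.inl (by simp at hx; nlinarith))).hasDerivWithinAt
  have bound : ∀ x ∈ Set.Ici ε, ‖(p - 1) * x ^ (p - 1 - 1)‖ ≤ (1 - p) * ε ^ (p - 2) := by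
    intro x hx
    simp only [Set.mem_Ici] at hx
    have hxpos : 0 < x := lt_of_lt_of_le hε hx
    rw [Real.norm_eq_abs, abs_mul, abs_of_nonpos (by linarith),
      abs_of_nonneg (Real.rpow_nonneg hxpos.le _)]
    have : x ^ (p - 1 - 1) ≤ ε ^ (p - 2) := by
      rw [show p - 1 - 1 = p - 2 by ring]
      exact Real.rpow_le_rpow_of_nonpos hε hx (by linarith)
    nlinarith
  have := Convex.norm_image_sub_le_of_norm_hasDerivWithin_le key bound (convex_Ici ε)
    hb ha
  simpa [Real.norm_eq_abs] using this

/-- Quantitative bound on the relative-error vector: with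
`|u_j - f_j| ≥ ε`, `|v_j - f_j| ≥ ε` on `Γ`, weights `w_j(x) = p|x_j - f_j|^(p-1)`,
and `α = λ ∑_{j∈Γ} (w_j(v) - w_j(u))·sgn(v_j - f_j)·e_j - ρ(v - u)`, one has
`‖α‖ ≤ (λp(1-p)ε^(p-2)·N + ρ)‖v - u‖`. -/
theorem alpha_bound (N : ℕ) (f : Fin N → ℝ) (lam p : ℝ)
    (hlam : 0 < lam) (hp0 : 0 < p) (hp1 : p < 1)
    (Γ : Finset (Fin N)) (ε ρ : ℝ) (hε : 0 < ε) (hρ : 0 < ρ)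
    (u v : Fin N → ℝ)
    (hu : ∀ j ∈ Γ, ε ≤ |u j - f j|) (hv : ∀ j ∈ Γ, ε ≤ |v j - f j|)
    (α : Fin N → ℝ)
    (hα : ∀ j : Fin N, α j =
      (if j ∈ Γ then
        lam * (p * |v j - f j| ^ (p - 1) - p * |u j - f j| ^ (p - 1)) *
          Real.sign (v j - f j)
      else 0) - ρ * (v j - u j)) :
    Real.sqrt (∑ j, α j ^ 2) ≤
      (lam * p * (1 - p) * ε ^ (p - 2) * N + ρ) *
        Real.sqrt (∑ j, (v j - u j) ^ 2) := by
  set C : ℝ := lam * p * (1 - p) * ε ^ (p - 2) * N + ρ with hC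
  have hεp : 0 < ε ^ (p - 2) := Real.rpow_pos_of_pos hε _
  have h1p : (0:ℝ) < 1 - p := by linarith
  have hcoef : 0 < lam * p * (1 - p) * ε ^ (p - 2) :=
    mul_pos (mul_pos (mul_pos hlam hp0) h1p) hεp
  have hN0 : (0:ℝ) ≤ N := Nat.cast_nonneg N
  have hcoefN : 0 ≤ lam * p * (1 - p) * ε ^ (p - 2) * N := mul_nonneg hcoef.le hN0
  have hCpos : 0 < C := by rw [hC]; linarith
  -- pointwise bound
  have hpt : ∀ j : Fin N, |α j| ≤ C * |v j - u j| := by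
    intro j
    rw [hα j]
    by_cases hjΓ : j ∈ Γ
    · simp only [hjΓ, if_true]
      have hN1 : (1 : ℝ) ≤ N := by
        have : 0 < N := Fin.pos j
        exact_mod_cast this
      have hsg : |Real.sign (v j - f j)| ≤ 1 := by
        rcases lt_trichotomy (v j - f j) 0 with h | h | h
        · simp [Real.sign_of_neg h]
        · simp [h]
        · simp [Real.sign_of_pos h]
      have habs : abs (|v j - f j| - |u j - f j|) ≤ |v j - u j| := by
        have h := abs_abs_sub_abs_le_abs_sub (v j - f j) (u j - f j)
        have heq : (v j - f j) - (u j - f j) = v j - u j := by ring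
        rwa [heq] at h
      have hlip := rpow_lip p ε hp0 hp1 hε _ _ (hv j hjΓ) (hu j hjΓ)
      have key : |p * |v j - f j| ^ (p - 1) - p * |u j - f j| ^ (p - 1)| ≤
          p * (1 - p) * ε ^ (p - 2) * |v j - u j| := by
        rw [show p * |v j - f j| ^ (p - 1) - p * |u j - f j| ^ (p - 1)
            = p * (|v j - f j| ^ (p - 1) - |u j - f j| ^ (p - 1)) by ring,
          abs_mul, abs_of_pos hp0]
        calc p * abs (|v j - f j| ^ (p - 1) - |u j - f j| ^ (p - 1))
            ≤ p * ((1 - p) * ε ^ (p - 2) * abs (|v j - f j| - |u j - f j|)) := by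
              exact mul_le_mul_of_nonneg_left hlip hp0.le
          _ ≤ p * ((1 - p) * ε ^ (p - 2) * |v j - u j|) := by
              have h5 : (0:ℝ) ≤ (1 - p) * ε ^ (p - 2) := mul_nonneg h1p.le hεp.le
              nlinarith
          _ = p * (1 - p) * ε ^ (p - 2) * |v j - u j| := by ring
      calc |lam * (p * |v j - f j| ^ (p - 1) - p * |u j - f j| ^ (p - 1)) *
              Real.sign (v j - f j) - ρ * (v j - u j)|
          ≤ |lam * (p * |v j - f j| ^ (p - 1) - p * |u j - f j| ^ (p - 1)) *
              Real.sign (v j - f j)| + |ρ * (v j - u j)| := abs_sub _ _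
        _ = lam * |p * |v j - f j| ^ (p - 1) - p * |u j - f j| ^ (p - 1)| *
              |Real.sign (v j - f j)| + ρ * |v j - u j| := by
            rw [abs_mul, abs_mul, abs_mul, abs_of_pos hlam, abs_of_pos hρ]
        _ ≤ lam * (p * (1 - p) * ε ^ (p - 2) * |v j - u j|) * 1 + ρ * |v j - u j| := by
            have h1 : (0:ℝ) ≤ |p * |v j - f j| ^ (p - 1) - p * |u j - f j| ^ (p - 1)| :=
              abs_nonneg _
            have h2 : (0:ℝ) ≤ |Real.sign (v j - f j)| := abs_nonneg _
            have h3 : (0:ℝ) ≤ p * (1 - p) * ε ^ (p - 2) * |v j - u j| :=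
              mul_nonneg (mul_nonneg (mul_nonneg hp0.le h1p.le) hεp.le) (abs_nonneg _)
            nlinarith [mul_le_mul_of_nonneg_left (mul_le_mul key hsg h2 h3) hlam.le]
        _ ≤ C * |v j - u j| := by
            rw [hC]
            nlinarith [mul_nonneg (mul_nonneg hcoef.le (sub_nonneg.mpr hN1))
              (abs_nonneg (v j - u j))]
    · rw [if_neg hjΓ, zero_sub, abs_neg, abs_mul, abs_of_pos hρ]
      nlinarith [abs_nonneg (v j - u j)]
  -- sum of squares
  have hsq : ∀ j : Fin N, α j ^ 2 ≤ C ^ 2 * (v j - u j) ^ 2 := by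
    intro j
    have h := hpt j
    have := sq_abs (α j)
    nlinarith [abs_nonneg (α j), abs_nonneg (v j - u j), sq_abs (α j), sq_abs (v j - u j)]
  have hsum : ∑ j, α j ^ 2 ≤ C ^ 2 * ∑ j, (v j - u j) ^ 2 := by
    rw [Finset.mul_sum]
    exact Finset.sum_le_sum fun j _ => hsq j
  calc Real.sqrt (∑ j, α j ^ 2) ≤ Real.sqrt (C ^ 2 * ∑ j, (v j - u j) ^ 2) :=
        Real.sqrt_le_sqrt hsum
    _ = C * Real.sqrt (∑ j, (v j - u j) ^ 2) := by
        rw [Real.sqrt_mul (sq_nonneg C), Real.sqrt_sq hCpos.le]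
end
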